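/- (Lemma 7) Fix an integer n ≥ 1 and reals p ∈ (0,1), p_e ≥ 0, x_S > 0, L > 1. For each 1 ≤ m ≤ n−1 let y^{(m)} be the unique fully-connected age family with parameters (n, m, p, p_e, x_S), and define a_m := y^{(m)}(1) for 1 ≤ m ≤ n−1 and a_n := x_S. Then there exists a unique integer m* ∈ {1, …, n} such that a_{m*} < L·x_S and (m* = 1 or a_{m*−1} ≥ L·x_S). (m* is the unique number of subscribers for which the fully-connected network is AC-stable: every non-subscriber's expected age satisfies the age-compatibility constraint a_{m*} < L·x_S, while any subscriber that unsubscribed would violate it.) -/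

import Mathlib

/-- A fully-connected age family with parameters `n`, `m`, `p`, `pe`, `xS`:
`y k` is the long-term expected version age of a block of `k` non-subscribing
users in a fully-connected gossip network of `n` users with `m` subscribers. -/
def IsFCAgeFamily (n m : ℕ) (p pe xS : ℝ) (y : ℕ → ℝ) : Prop :=
  ∀ k : ℕ, 1 ≤ k → k ≤ n - m →
    y k * (1 - (1 - p) ^ (k * (n - k))) =
      pe + (∑ i ∈ Finset.Icc 1 (n - m - k),
        (Nat.choose (n - m - k) i : ℝ) * y (k + i) * (1 - (1 - p) ^ k) ^ i
          * (1 - p) ^ (k * (n - k - i)))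
      + (1 - (1 - p) ^ (k * m)) * xS


lemma binom_Icc_sum (c q : ℝ) (h : c + q = 1) (M : ℕ) :
    ∑ i ∈ Finset.Icc 1 M, (M.choose i : ℝ) * c ^ i * q ^ (M - i) = 1 - q ^ M := by
  have h1 : ∑ i ∈ Finset.range (M + 1), c ^ i * q ^ (M - i) * (M.choose i : ℝ) = 1 := by
    rw [← add_pow, h, one_pow]
  rw [Finset.sum_range_succ' (fun i => c ^ i * q ^ (M - i) * (M.choose i : ℝ)) M] at h1
  simp only [pow_zero, Nat.sub_zero, Nat.choose_zero_right, Nat.cast_one, one_mul, mul_one] at h1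
  rw [← Finset.Ico_add_one_right_eq_Icc, Finset.sum_Ico_eq_sum_range]
  simp only [Nat.add_sub_cancel_left, Nat.succ_sub_one, Nat.add_sub_cancel]
  have : ∀ i ∈ Finset.range M, (M.choose (1 + i) : ℝ) * c ^ (1 + i) * q ^ (M - (1 + i))
      = c ^ (i + 1) * q ^ (M - (i + 1)) * (M.choose (i + 1) : ℝ) := by
    intro i _
    rw [add_comm 1 i]; ring
  rw [Finset.sum_congr rfl this]
  linarith


lemma binom_shift_sum (c q : ℝ) (h : c + q = 1) (M : ℕ) (hM : 1 ≤ M) :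
    ∑ i ∈ Finset.Icc 1 M, ((M-1).choose (i-1) : ℝ) * c ^ i * q ^ (M - i) = c := by
  have h1 : ∑ j ∈ Finset.range (M-1+1), c^j * q^(M-1-j) * (((M-1).choose j : ℝ)) = 1 := by
    rw [← add_pow, h, one_pow]
  have hM1 : M - 1 + 1 = M := by omega
  rw [hM1] at h1
  rw [← Finset.Ico_add_one_right_eq_Icc, Finset.sum_Ico_eq_sum_range]
  simp only [Nat.add_sub_cancel_left, Nat.succ_sub_one, Nat.add_sub_cancel]
  have he : ∀ j ∈ Finset.range M, ((M-1).choose j : ℝ) * c ^ (1+j) * q ^ (M - (1+j))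
      = c * (c^j * q^(M-1-j) * ((M-1).choose j : ℝ)) := by
    intro j _
    have e2 : M - (1+j) = M - 1 - j := by omega
    rw [e2]; ring
  rw [Finset.sum_congr rfl he, ← Finset.mul_sum, h1, mul_one]

lemma fc_ge_xS (n m : ℕ) (p pe xS : ℝ) (hp0 : 0 < p) (hp1 : p < 1) (hpe : 0 ≤ pe)
    (hxS : 0 < xS) (hm1 : 1 ≤ m) (hmn : m + 1 ≤ n)
    (y : ℕ → ℝ) (hfam : IsFCAgeFamily n m p pe xS y) :
    ∀ k, 1 ≤ k → k ≤ n - m → xS ≤ y k := by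
  have hq0 : (0:ℝ) < 1 - p := by linarith
  have hq1 : 1 - p < 1 := by linarith
  suffices H : ∀ d k, 1 ≤ k → k ≤ n - m → n - m - k = d → xS ≤ y k by
    intro k hk1 hk2; exact H _ k hk1 hk2 rfl
  intro d
  induction d using Nat.strong_induction_on with
  | _ d ih =>
    intro k hk1 hk2 hkd
    set M := n - m - k with hM
    have hrec := hfam k hk1 hk2
    rw [← hM] at hrec
    have hqlt : ∀ e : ℕ, 1 ≤ e → (1-p)^e < 1 := fun e he => pow_lt_one₀ hq0.le hq1 (by omega)
    have hc : (0:ℝ) ≤ 1 - (1-p)^k := by have := hqlt k hk1; linarith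
    have hD : (0:ℝ) < 1 - (1-p)^(k*(n-k)) := by
      have h1 : 1 ≤ k*(n-k) := Nat.one_le_iff_ne_zero.2 (Nat.mul_ne_zero (by omega) (by omega))
      have := hqlt _ h1; linarith
    -- lower bound each summand
    have hterm : ∀ i ∈ Finset.Icc 1 M,
        ((M.choose i : ℝ) * (1-(1-p)^k) ^ i * ((1-p)^k) ^ (M - i)) * (xS * (1-p)^(k*m)) ≤
          (M.choose i : ℝ) * y (k+i) * (1-(1-p)^k)^i * (1-p)^(k*(n-k-i)) := by
      intro i hi
      rw [Finset.mem_Icc] at hi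
      have hyi : xS ≤ y (k+i) := ih (n-m-(k+i)) (by omega) (k+i) (by omega) (by omega) rfl
      have h1 : n - k - i = (M - i) + m := by omega
      have hexp : k*(n-k-i) = k*(M-i) + k*m := by rw [h1, Nat.mul_add]
      have hqq : (1-p)^(k*(n-k-i)) = ((1-p)^k)^(M-i) * (1-p)^(k*m) := by
        rw [hexp, pow_add, pow_mul]
      rw [hqq]
      have hre : (M.choose i : ℝ) * y (k+i) * (1-(1-p)^k)^i * (((1-p)^k)^(M-i) * (1-p)^(k*m))
          = ((M.choose i : ℝ) * (1-(1-p)^k) ^ i * ((1-p)^k) ^ (M - i)) * (y (k+i) * (1-p)^(k*m)) := by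
        ring
      rw [hre]
      have hX : (0:ℝ) ≤ (M.choose i : ℝ) * (1-(1-p)^k) ^ i * ((1-p)^k) ^ (M - i) :=
        mul_nonneg (mul_nonneg (Nat.cast_nonneg _) (pow_nonneg hc i))
          (pow_nonneg (pow_nonneg hq0.le k) _)
      exact mul_le_mul_of_nonneg_left
        (mul_le_mul_of_nonneg_right hyi (pow_nonneg hq0.le _)) hX
    have hsum := Finset.sum_le_sum hterm
    rw [← Finset.sum_mul, binom_Icc_sum (1-(1-p)^k) ((1-p)^k) (by ring) M] at hsum
    -- rewrite the target product
    have h2 : n - k = M + m := by omega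
    have hDk : k*(n-k) = k*M + k*m := by rw [h2, Nat.mul_add]
    have hDeq : (1-p)^(k*(n-k)) = ((1-p)^k)^M * (1-p)^(k*m) := by
      rw [hDk, pow_add, pow_mul]
    rw [hDeq] at hrec hD
    have hfin : xS * (1 - ((1-p)^k)^M * (1-p)^(k*m)) ≤
        y k * (1 - ((1-p)^k)^M * (1-p)^(k*m)) := by nlinarith
    exact le_of_mul_le_mul_right (by linarith [hfin]) hD

lemma fc_mono (n m : ℕ) (p pe xS : ℝ) (hp0 : 0 < p) (hp1 : p < 1) (hpe : 0 ≤ pe)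
    (hxS : 0 < xS) (hm1 : 1 ≤ m) (hmn : m + 2 ≤ n)
    (ym ym1 : ℕ → ℝ) (hfm : IsFCAgeFamily n m p pe xS ym)
    (hfm1 : IsFCAgeFamily n (m+1) p pe xS ym1) :
    ∀ k, 1 ≤ k → k ≤ n - (m+1) → ym1 k ≤ ym k := by
  have hq0 : (0:ℝ) < 1 - p := by linarith
  have hq1 : 1 - p < 1 := by linarith
  have hA := fc_ge_xS n m p pe xS hp0 hp1 hpe hxS hm1 (by omega) ym hfm
  suffices H : ∀ d k, 1 ≤ k → k ≤ n - (m+1) → n - (m+1) - k = d → ym1 k ≤ ym k by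
    intro k hk1 hk2; exact H _ k hk1 hk2 rfl
  intro d
  induction d using Nat.strong_induction_on with
  | _ d ih =>
    intro k hk1 hk2 hkd
    set M := n - m - k with hM
    have hM1 : 1 ≤ M := by omega
    have hrecm := hfm k hk1 (by omega)
    have hrecm1 := hfm1 k hk1 hk2
    rw [← hM] at hrecm
    have hIdx : n - (m+1) - k = M - 1 := by omega
    rw [hIdx] at hrecm1
    have hqlt : ∀ e : ℕ, 1 ≤ e → (1-p)^e < 1 := fun e he => pow_lt_one₀ hq0.le hq1 (by omega)
    have hc : (0:ℝ) ≤ 1 - (1-p)^k := by have := hqlt k hk1; linarith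
    have hD : (0:ℝ) < 1 - (1-p)^(k*(n-k)) := by
      have h1 : 1 ≤ k*(n-k) := Nat.one_le_iff_ne_zero.2 (Nat.mul_ne_zero (by omega) (by omega))
      have := hqlt _ h1; linarith
    -- Pascal split of the sum in hrecm
    have hps : ∀ i ∈ Finset.Icc 1 M,
        (M.choose i : ℝ) * ym (k+i) * (1-(1-p)^k)^i * (1-p)^(k*(n-k-i))
        = ((M-1).choose i : ℝ) * ym (k+i) * (1-(1-p)^k)^i * (1-p)^(k*(n-k-i))
          + ((M-1).choose (i-1) : ℝ) * ym (k+i) * (1-(1-p)^k)^i * (1-p)^(k*(n-k-i)) := by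
      intro i hi
      rw [Finset.mem_Icc] at hi
      obtain ⟨i', rfl⟩ : ∃ i', i = i' + 1 := ⟨i - 1, by omega⟩
      obtain ⟨M', hM'⟩ : ∃ M', M = M' + 1 := ⟨M - 1, by omega⟩
      rw [hM', Nat.choose_succ_succ']
      simp only [Nat.add_sub_cancel]
      push_cast
      ring
    rw [Finset.sum_congr rfl hps, Finset.sum_add_distrib] at hrecm
    -- the first Pascal piece: top term vanishes
    set f : ℕ → ℝ := fun i =>
      ((M-1).choose i : ℝ) * ym (k+i) * (1-(1-p)^k)^i * (1-p)^(k*(n-k-i)) with hf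
    have hIoc : Finset.Icc 1 M = Finset.Ioc 0 M := by ext x; simp; omega
    have hIoc2 : Finset.Icc 1 (M-1) = Finset.Ioc 0 (M-1) := by ext x; simp; omega
    have htop : ∑ i ∈ Finset.Icc 1 M, f i = ∑ i ∈ Finset.Icc 1 (M-1), f i := by
      have h0 := Finset.sum_Ioc_succ_top (Nat.zero_le (M-1)) f
      have hMM : M - 1 + 1 = M := by omega
      rw [hMM] at h0
      have hfM : f M = 0 := by
        have : (M-1).choose M = 0 := Nat.choose_eq_zero_of_lt (by omega)
        simp [hf, this]
      rw [hIoc, hIoc2, h0, hfM, add_zero]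
    rw [htop] at hrecm
    -- first piece dominates the sum in hrecm1 (by induction hypothesis)
    have hT1 : ∑ i ∈ Finset.Icc 1 (M-1),
        ((M-1).choose i : ℝ) * ym1 (k+i) * (1-(1-p)^k)^i * (1-p)^(k*(n-k-i))
        ≤ ∑ i ∈ Finset.Icc 1 (M-1), f i := by
      apply Finset.sum_le_sum
      intro i hi
      rw [Finset.mem_Icc] at hi
      have hyy : ym1 (k+i) ≤ ym (k+i) :=
        ih (n-(m+1)-(k+i)) (by omega) (k+i) (by omega) (by omega) rfl
      have hX : (0:ℝ) ≤ ((M-1).choose i : ℝ) * (1-(1-p)^k)^i * (1-p)^(k*(n-k-i)) :=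
        mul_nonneg (mul_nonneg (Nat.cast_nonneg _) (pow_nonneg hc i))
          (pow_nonneg hq0.le _)
      simp only [hf]
      nlinarith [mul_le_mul_of_nonneg_left hyy hX]
    -- second piece is at least xS * c * q^(km)
    have hS2 : (1-(1-p)^k) * (xS * (1-p)^(k*m)) ≤
        ∑ i ∈ Finset.Icc 1 M,
          ((M-1).choose (i-1) : ℝ) * ym (k+i) * (1-(1-p)^k)^i * (1-p)^(k*(n-k-i)) := by
      have hterm : ∀ i ∈ Finset.Icc 1 M,
          (((M-1).choose (i-1) : ℝ) * (1-(1-p)^k)^i * ((1-p)^k)^(M-i)) * (xS * (1-p)^(k*m))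
          ≤ ((M-1).choose (i-1) : ℝ) * ym (k+i) * (1-(1-p)^k)^i * (1-p)^(k*(n-k-i)) := by
        intro i hi
        rw [Finset.mem_Icc] at hi
        have hyi : xS ≤ ym (k+i) := hA (k+i) (by omega) (by omega)
        have h1 : n - k - i = (M - i) + m := by omega
        have hexp : k*(n-k-i) = k*(M-i) + k*m := by rw [h1, Nat.mul_add]
        have hqq : (1-p)^(k*(n-k-i)) = ((1-p)^k)^(M-i) * (1-p)^(k*m) := by
          rw [hexp, pow_add, pow_mul]
        rw [hqq]
        have hre : ((M-1).choose (i-1) : ℝ) * ym (k+i) * (1-(1-p)^k)^i * (((1-p)^k)^(M-i) * (1-p)^(k*m))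
            = (((M-1).choose (i-1) : ℝ) * (1-(1-p)^k)^i * ((1-p)^k)^(M-i)) * (ym (k+i) * (1-p)^(k*m)) := by
          ring
        rw [hre]
        have hX : (0:ℝ) ≤ ((M-1).choose (i-1) : ℝ) * (1-(1-p)^k)^i * ((1-p)^k)^(M-i) :=
          mul_nonneg (mul_nonneg (Nat.cast_nonneg _) (pow_nonneg hc i))
            (pow_nonneg (pow_nonneg hq0.le k) _)
        exact mul_le_mul_of_nonneg_left
          (mul_le_mul_of_nonneg_right hyi (pow_nonneg hq0.le _)) hX
      have := Finset.sum_le_sum hterm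
      rw [← Finset.sum_mul, binom_shift_sum (1-(1-p)^k) ((1-p)^k) (by ring) M hM1] at this
      exact this
    -- combine
    have hq2 : (1-p)^(k*(m+1)) = (1-p)^(k*m) * (1-p)^k := by
      rw [Nat.mul_succ, pow_add]
    rw [hq2] at hrecm1
    have hfinal : ym1 k * (1 - (1-p)^(k*(n-k))) ≤ ym k * (1 - (1-p)^(k*(n-k))) := by
      rw [hrecm, hrecm1]
      simp only [hf] at hT1 ⊢
      nlinarith [hT1, hS2]
    exact le_of_mul_le_mul_right hfinal hD

/-- Lemma 7: with `a m = y^{(m)}(1)` for `1 ≤ m ≤ n − 1` (the expected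
age of a non-subscriber when there are `m` subscribers) and `a n = x_S`, there is a
unique `m* ∈ {1,…,n}` with `a m* < L·x_S` and (`m* = 1` or `a (m*−1) ≥ L·x_S`). -/
theorem fc_unique_stable_subscriber_count (n : ℕ) (hn : 1 ≤ n)
    (p pe xS L : ℝ) (hp0 : 0 < p) (hp1 : p < 1) (hpe : 0 ≤ pe)
    (hxS : 0 < xS) (hL : 1 < L)
    (y : ℕ → ℕ → ℝ)
    (hy : ∀ m : ℕ, 1 ≤ m → m ≤ n - 1 → IsFCAgeFamily n m p pe xS (y m))
    (a : ℕ → ℝ)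
    (ha : ∀ m : ℕ, 1 ≤ m → m ≤ n - 1 → a m = y m 1)
    (han : a n = xS) :
    ∃! mstar : ℕ, (1 ≤ mstar ∧ mstar ≤ n) ∧ a mstar < L * xS ∧
      (mstar = 1 ∨ L * xS ≤ a (mstar - 1)) := by
  classical
  -- one-step monotonicity of `a`
  have step : ∀ m, 1 ≤ m → m + 1 ≤ n - 1 → a (m+1) ≤ a m := by
    intro m h1 h2
    rw [ha m h1 (by omega), ha (m+1) (by omega) h2]
    exact fc_mono n m p pe xS hp0 hp1 hpe hxS h1 (by omega) (y m) (y (m+1))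
      (hy m h1 (by omega)) (hy (m+1) (by omega) h2) 1 le_rfl (by omega)
  -- monotonicity of `a` on `[1, n-1]`
  have amono : ∀ d m1, 1 ≤ m1 → m1 + d ≤ n - 1 → a (m1 + d) ≤ a m1 := by
    intro d
    induction d with
    | zero => intro m1 _ _; simp
    | succ d ihd =>
      intro m1 h1 h2
      have e : m1 + (d+1) = (m1 + d) + 1 := by omega
      rw [e]
      exact le_trans (step (m1+d) (by omega) (by omega)) (ihd m1 h1 (by omega))
  -- existence of a minimal stable count
  have hP : ∃ m : ℕ, (1 ≤ m ∧ m ≤ n) ∧ a m < L * xS :=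
    ⟨n, ⟨hn, le_rfl⟩, by rw [han]; nlinarith⟩
  set m0 := Nat.find hP with hm0
  have hPm0 := Nat.find_spec hP
  refine ⟨m0, ⟨⟨hPm0.1.1, hPm0.1.2⟩, hPm0.2, ?_⟩, ?_⟩
  · rcases eq_or_ne m0 1 with h | h
    · exact Or.inl h
    · right
      have hm2 : 2 ≤ m0 := by have := hPm0.1.1; omega
      have hnot := Nat.find_min hP (m := m0 - 1) (by omega)
      by_contra hcon
      push_neg at hcon
      exact hnot ⟨⟨by omega, by omega⟩, hcon⟩
  · rintro m' ⟨⟨h1', h2'⟩, h3', h4'⟩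
    by_contra hne
    rcases lt_or_gt_of_ne hne with hlt | hgt
    · exact Nat.find_min hP hlt ⟨⟨h1', h2'⟩, h3'⟩
    · have hm0ge : 1 ≤ m0 := hPm0.1.1
      have hm'2 : 2 ≤ m' := by omega
      have h5' : L * xS ≤ a (m' - 1) := by
        rcases h4' with h | h
        · omega
        · exact h
      have hle : a (m' - 1) ≤ a m0 := by
        have e : m' - 1 = m0 + (m' - 1 - m0) := by omega
        rw [e]
        exact amono (m' - 1 - m0) m0 hm0ge (by omega)
      have := hPm0.2
      linarith
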